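/- Let k, ℓ ≥ 2 be multiplicatively independent integers. Then the set {k^s / ℓ^t : s, t ∈ ℕ} is dense in the positive reals ℝ_{>0}. -/
import Mathlib

open Real Set

private lemma toNat_cast_real (n : ℤ) (h : 0 ≤ n) : ((n.toNat : ℕ) : ℝ) = (n : ℝ) := by
  exact_mod_cast Int.toNat_of_nonneg h

private lemma key_nat_eq (k l : ℕ) (hk : 2 ≤ k) (hl : 2 ≤ l)
    (N M : ℕ) (h : (N : ℝ) * Real.log k = (M : ℝ) * Real.log l) :
    k ^ N = l ^ M := by
  have hk0 : (0:ℝ) < k := by positivity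
  have hl0 : (0:ℝ) < l := by positivity
  have : Real.log ((k:ℝ) ^ N) = Real.log ((l:ℝ) ^ M) := by
    rw [Real.log_pow, Real.log_pow]; exact_mod_cast h
  have := Real.log_injOn_pos (by simp [mem_Ioi]; positivity) (by simp [mem_Ioi]; positivity) this
  exact_mod_cast this

/-- For multiplicatively independent `k, ℓ ≥ 2`, the set `{k^s/ℓ^t : s,t ∈ ℕ}`
is dense in the positive reals. -/
theorem powers_ratio_dense (k l : ℕ) (hk : 2 ≤ k) (hl : 2 ≤ l)
    (hmi : ∀ s t : ℕ, k ^ s = l ^ t → s = 0 ∧ t = 0) :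
    ∀ x : ℝ, 0 < x →
      x ∈ closure {r : ℝ | ∃ s t : ℕ, r = (k : ℝ) ^ s / (l : ℝ) ^ t} := by
  intro x hx
  set a : ℝ := Real.log k with ha_def
  set b : ℝ := Real.log l with hb_def
  have ha : 0 < a := Real.log_pos (by exact_mod_cast hk.trans_lt' one_lt_two)
  have hb : 0 < b := Real.log_pos (by exact_mod_cast hl.trans_lt' one_lt_two)
  -- the subgroup generated by a and b is dense
  have hdense : Dense ((AddSubgroup.closure {a, b} : AddSubgroup ℝ) : Set ℝ) := by
    rcases (AddSubgroup.closure {a, b}).dense_or_cyclic with h | ⟨c, hc⟩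
    · exact h
    · exfalso
      have hamem : a ∈ AddSubgroup.closure {a, b} :=
        AddSubgroup.subset_closure (by simp)
      have hbmem : b ∈ AddSubgroup.closure {a, b} :=
        AddSubgroup.subset_closure (by simp)
      rw [hc] at hamem hbmem
      rcases AddSubgroup.mem_closure_singleton.mp hamem with ⟨m, hm⟩
      rcases AddSubgroup.mem_closure_singleton.mp hbmem with ⟨n, hn⟩
      have key : (n : ℝ) * a = (m : ℝ) * b := by
        have : n • (m • c) = m • (n • c) := by rw [smul_comm]
        rw [hm, hn] at this
        simpa [zsmul_eq_mul] using this
      have hm0 : m ≠ 0 := by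
        rintro rfl; rw [← hm] at ha; simp at ha
      have hn0 : n ≠ 0 := by
        rintro rfl; rw [← hn] at hb; simp at hb
      -- n and m have the same sign since n*a = m*b with a,b > 0
      rcases lt_or_gt_of_ne hn0 with hn' | hn'
      · -- n < 0, then m < 0
        have hm' : m < 0 := by
          by_contra h'
          push_neg at h'
          have h1 : (n:ℝ) * a < 0 := mul_neg_of_neg_of_pos (by exact_mod_cast hn') ha
          have h2 : (0:ℝ) ≤ (m:ℝ) * b := mul_nonneg (by exact_mod_cast h') hb.le
          linarith [key]
        have key' : ((-n).toNat : ℝ) * a = ((-m).toNat : ℝ) * b := by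
          rw [toNat_cast_real _ (by omega), toNat_cast_real _ (by omega)]
          push_cast
          linarith [key]
        obtain ⟨h1, h2⟩ := hmi _ _ (key_nat_eq k l hk hl _ _ key')
        omega
      · have hm' : 0 < m := by
          by_contra h'
          push_neg at h'
          have h1 : (0:ℝ) < (n:ℝ) * a := mul_pos (by exact_mod_cast hn') ha
          have h2 : (m:ℝ) * b ≤ 0 := mul_nonpos_of_nonpos_of_nonneg (by exact_mod_cast h') hb.le
          linarith [key]
        have key' : ((n).toNat : ℝ) * a = ((m).toNat : ℝ) * b := by
          rw [toNat_cast_real _ (by omega), toNat_cast_real _ (by omega)]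
          exact key
        obtain ⟨h1, h2⟩ := hmi _ _ (key_nat_eq k l hk hl _ _ key')
        omega
  -- D: the set of s•a - t•b
  set D : Set ℝ := {d : ℝ | ∃ s t : ℕ, d = (s : ℝ) * a - (t : ℝ) * b} with hD_def
  -- log x is in the closure of D
  have hlogx : Real.log x ∈ closure D := by
    rw [Metric.mem_closure_iff]
    intro ε hε
    set y := Real.log x
    -- find a small nonzero element of D
    set ε' : ℝ := min ε (min a b) with hε'_def
    have hε'0 : 0 < ε' := lt_min hε (lt_min ha hb)
    obtain ⟨g, hgmem, hg⟩ : ∃ g ∈ (AddSubgroup.closure {a, b} : AddSubgroup ℝ), g ∈ Ioo 0 ε' := by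
      have := hdense.exists_mem_open isOpen_Ioo (Set.nonempty_Ioo.mpr hε'0)
      tauto
    rcases AddSubgroup.mem_closure_pair.mp hgmem with ⟨p, q, hpq⟩
    -- get an element c ∈ D with 0 < |c| < ε'
    obtain ⟨c, hcD, hc0, hcε⟩ : ∃ c ∈ D, c ≠ 0 ∧ |c| < ε' := by
      rcases le_or_gt q 0 with hq | hq
      · -- then p ≥ 1, c = g
        have hp : 0 < p := by
          by_contra h'
          push_neg at h'
          have : p • a + q • b ≤ 0 := by
            have h1 : (p:ℝ) * a ≤ 0 := mul_nonpos_of_nonpos_of_nonneg (by exact_mod_cast h') ha.le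
            have h2 : (q:ℝ) * b ≤ 0 := mul_nonpos_of_nonpos_of_nonneg (by exact_mod_cast hq) hb.le
            simpa [zsmul_eq_mul] using add_nonpos h1 h2
          rw [hpq] at this
          exact absurd this (not_le.mpr hg.1)
        refine ⟨g, ⟨p.toNat, (-q).toNat, ?_⟩, hg.1.ne', ?_⟩
        · rw [← hpq, toNat_cast_real _ (by omega), toNat_cast_real _ (by omega)]
          push_cast [zsmul_eq_mul]
          ring
        · rw [abs_of_pos hg.1]; exact hg.2
      · -- q ≥ 1, then p ≤ -1 (since g < ε' ≤ b), c = -g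
        have hp : p < 0 := by
          by_contra h'
          push_neg at h'
          have : b ≤ p • a + q • b := by
            have h1 : (0:ℝ) ≤ (p:ℝ) * a := mul_nonneg (by exact_mod_cast h') ha.le
            have h2 : b ≤ (q:ℝ) * b := le_mul_of_one_le_left hb.le (by exact_mod_cast hq)
            simp only [zsmul_eq_mul]
            linarith
          rw [hpq] at this
          have : ε' ≤ g := le_trans (le_trans (min_le_right _ _) (min_le_right a b)) this
          exact absurd this (not_le.mpr hg.2)
        refine ⟨-g, ⟨(-p).toNat, q.toNat, ?_⟩, by simpa using hg.1.ne', ?_⟩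
        · rw [← hpq, toNat_cast_real _ (by omega), toNat_cast_real _ (by omega)]
          push_cast [zsmul_eq_mul]
          ring
        · rw [abs_neg, abs_of_pos hg.1]; exact hg.2
    obtain ⟨s0, t0, hc_eq⟩ := hcD
    -- D is closed under addition; use multiples of c plus shifts
    rcases hc0.lt_or_gt with hcneg | hcpos
    · -- c < 0: pick s with y - s*a ≤ 0, then n•c close to y - s*a
      obtain ⟨s, hs⟩ := Archimedean.arch y ha
      have hys : y - (s:ℝ) * a ≤ 0 := by
        simp only [nsmul_eq_mul] at hs; linarith
      set n : ℕ := ⌊(y - (s:ℝ) * a) / c⌋.toNat with hn_def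
      have hdiv0 : 0 ≤ (y - (s:ℝ) * a) / c := by
        rw [div_nonneg_iff]; right; exact ⟨hys, hcneg.le⟩
      have hfl : (n : ℝ) = ⌊(y - (s:ℝ) * a) / c⌋ := by
        rw [hn_def]; exact_mod_cast Int.toNat_of_nonneg (Int.le_floor.mpr (by simpa using hdiv0))
      have h1 : (n:ℝ) ≤ (y - (s:ℝ) * a) / c := by rw [hfl]; exact Int.floor_le _
      have h2 : (y - (s:ℝ) * a) / c < (n:ℝ) + 1 := by rw [hfl]; exact Int.lt_floor_add_one _
      -- n * c ≥ y - s*a > (n+1) * c  (since c < 0)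
      have hub : (n:ℝ) * c ≥ y - (s:ℝ) * a := by
        have := mul_le_mul_of_nonpos_right h1 hcneg.le
        rwa [div_mul_cancel₀ _ hc0] at this
      have hlb : y - (s:ℝ) * a > ((n:ℝ) + 1) * c := by
        have := mul_lt_mul_of_neg_right h2 hcneg
        rwa [div_mul_cancel₀ _ hc0] at this
      have hcε2 : -c < ε := by
        have : |c| < ε := lt_of_lt_of_le hcε (min_le_left _ _)
        rw [abs_of_neg hcneg] at this; exact this
      refine ⟨(s:ℝ) * a + (n:ℝ) * c, ⟨s + n * s0, n * t0, by push_cast [hc_eq]; ring⟩, ?_⟩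
      rw [Real.dist_eq, abs_sub_lt_iff]
      constructor
      · nlinarith
      · nlinarith [hε]
    · -- c > 0: pick t with y + t*b ≥ 0, then n•c close to y + t*b
      obtain ⟨t, ht⟩ := Archimedean.arch (-y) hb
      have hyt : 0 ≤ y + (t:ℝ) * b := by
        simp only [nsmul_eq_mul] at ht; linarith
      set n : ℕ := ⌊(y + (t:ℝ) * b) / c⌋.toNat with hn_def
      have hdiv0 : 0 ≤ (y + (t:ℝ) * b) / c := div_nonneg hyt hcpos.le
      have hfl : (n : ℝ) = ⌊(y + (t:ℝ) * b) / c⌋ := by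
        rw [hn_def]; exact_mod_cast Int.toNat_of_nonneg (Int.le_floor.mpr (by simpa using hdiv0))
      have h1 : (n:ℝ) ≤ (y + (t:ℝ) * b) / c := by rw [hfl]; exact Int.floor_le _
      have h2 : (y + (t:ℝ) * b) / c < (n:ℝ) + 1 := by rw [hfl]; exact Int.lt_floor_add_one _
      have hub : (n:ℝ) * c ≤ y + (t:ℝ) * b := by
        have := mul_le_mul_of_nonneg_right h1 hcpos.le
        rwa [div_mul_cancel₀ _ hc0] at this
      have hlb : y + (t:ℝ) * b < ((n:ℝ) + 1) * c := by
        have := mul_lt_mul_of_pos_right h2 hcpos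
        rwa [div_mul_cancel₀ _ hc0] at this
      have hcε2 : c < ε := by
        have : |c| < ε := lt_of_lt_of_le hcε (min_le_left _ _)
        rw [abs_of_pos hcpos] at this; exact this
      refine ⟨(n:ℝ) * c - (t:ℝ) * b, ⟨n * s0, n * t0 + t, by push_cast [hc_eq]; ring⟩, ?_⟩
      rw [Real.dist_eq, abs_sub_lt_iff]
      constructor
      · nlinarith [hε]
      · nlinarith
  -- push through exp
  have hsub : Real.exp '' D ⊆ {r : ℝ | ∃ s t : ℕ, r = (k : ℝ) ^ s / (l : ℝ) ^ t} := by
    rintro _ ⟨d, ⟨s, t, rfl⟩, rfl⟩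
    refine ⟨s, t, ?_⟩
    rw [Real.exp_sub, ← Real.log_pow, ← Real.log_pow, Real.exp_log (by positivity),
      Real.exp_log (by positivity)]
  have : x = Real.exp (Real.log x) := (Real.exp_log hx).symm
  rw [this]
  exact closure_mono hsub
    (image_closure_subset_closure_image Real.continuous_exp ⟨Real.log x, hlogx, rfl⟩)
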